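/- If a unitary representation U of a finite group G induces a unitary 2-design on ℂ^d, then U is irreducible. -/

import Mathlib

open MeasureTheory Matrix
open scoped Kronecker ComplexConjugate

noncomputable section

variable {ι : Type} [Fintype ι] [DecidableEq ι]

abbrev UG (ι : Type) [Fintype ι] [DecidableEq ι] := Matrix.unitaryGroup ι ℂ

instance : IsTopologicalGroup (UG ι) where
  continuous_mul := by
    apply Continuous.subtype_mk
    exact (continuous_subtype_val.comp continuous_fst).matrix_mul
      (continuous_subtype_val.comp continuous_snd)
  continuous_inv := by
    apply Continuous.subtype_mk
    exact continuous_subtype_val.matrix_conjTranspose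

theorem isCompact_UG : IsCompact (Matrix.unitaryGroup ι ℂ : Set (Matrix ι ι ℂ)) := by
  have hK : IsCompact (Set.univ.pi fun _ : ι => Set.univ.pi fun _ : ι =>
      Metric.closedBall (0:ℂ) 1) :=
    isCompact_univ_pi fun _ => isCompact_univ_pi fun _ => isCompact_closedBall _ _
  have hof : Continuous (Matrix.of : (ι → ι → ℂ) → Matrix ι ι ℂ) := continuous_id
  have hK' := hK.image hof
  have hcl : IsClosed (Matrix.unitaryGroup ι ℂ : Set (Matrix ι ι ℂ)) := by
    have he : (Matrix.unitaryGroup ι ℂ : Set (Matrix ι ι ℂ)) =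
        (fun A : Matrix ι ι ℂ => A * star A) ⁻¹' {1} := by
      ext A
      simp [Matrix.mem_unitaryGroup_iff]
    rw [he]
    exact IsClosed.preimage (continuous_id.matrix_mul continuous_id.matrix_conjTranspose)
      isClosed_singleton
  apply hK'.of_isClosed_subset hcl
  intro A hA
  have h1 : star A * A = 1 := (Matrix.mem_unitaryGroup_iff').1 hA
  refine ⟨fun i j => A i j, ?_, rfl⟩
  intro i _
  intro j _
  have h2 : ∑ k, Complex.normSq (A k j) = 1 := by
    have h0 := congrFun (congrFun h1 j) j
    simp only [Matrix.mul_apply, Matrix.one_apply_eq, Matrix.star_apply] at h0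
    have h3 : ∀ k : ι, star (A k j) * A k j = (Complex.normSq (A k j) : ℂ) := by
      intro k
      rw [Complex.star_def, Complex.normSq_eq_conj_mul_self]
    simp only [h3] at h0
    exact_mod_cast (by exact_mod_cast h0 : ((∑ k, Complex.normSq (A k j) : ℝ) : ℂ) = 1)
  simp only [Metric.mem_closedBall, dist_zero_right]
  have h4 : Complex.normSq (A i j) ≤ 1 := by
    rw [← h2]
    exact Finset.single_le_sum (f := fun k => Complex.normSq (A k j))
      (fun k _ => Complex.normSq_nonneg _) (Finset.mem_univ i)
  have h5 := Complex.normSq_eq_norm_sq (A i j)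
  nlinarith [norm_nonneg (A i j)]

instance : CompactSpace (UG ι) := isCompact_iff_compactSpace.mp isCompact_UG

instance : MeasurableSpace (UG ι) := borel _
instance : BorelSpace (UG ι) := ⟨rfl⟩

/-- The normalized Haar (probability) measure on the unitary group. -/
def haarUG (ι : Type) [Fintype ι] [DecidableEq ι] : Measure (UG ι) :=
  Measure.haarMeasure
    (⟨⟨Set.univ, isCompact_univ⟩, by rw [interior_univ]; exact Set.univ_nonempty⟩ :
      TopologicalSpace.PositiveCompacts (UG ι))

/-- Haar average of (U⊗U) ρ (U⊗U)†, defined entrywise. -/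
def haarTwirl (ι : Type) [Fintype ι] [DecidableEq ι]
    (ρ : Matrix (ι × ι) (ι × ι) ℂ) : Matrix (ι × ι) (ι × ι) ℂ :=
  Matrix.of fun i j =>
    ∫ u : UG ι,
      ((((u : Matrix ι ι ℂ) ⊗ₖ (u : Matrix ι ι ℂ)) * ρ *
        ((u : Matrix ι ι ℂ) ⊗ₖ (u : Matrix ι ι ℂ))ᴴ) i j) ∂(haarUG ι)

/-- A finite family of matrices is a unitary 2-design. -/
def IsUnitaryTwoDesign {κ : Type} [Fintype κ] (Us : κ → Matrix ι ι ℂ) : Prop :=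
  (∀ k, Us k ∈ Matrix.unitaryGroup ι ℂ) ∧
  ∀ ρ : Matrix (ι × ι) (ι × ι) ℂ,
    ((Fintype.card κ : ℂ))⁻¹ • (∑ k, (Us k ⊗ₖ Us k) * ρ * (Us k ⊗ₖ Us k)ᴴ) = haarTwirl ι ρ

/-- The frame potential. -/
def framePotential {κ : Type} [Fintype κ] (Us : κ → Matrix ι ι ℂ) : ℝ :=
  ((Fintype.card κ : ℝ) ^ 2)⁻¹ *
    ∑ k : κ, ∑ k' : κ, ‖Matrix.trace ((Us k)ᴴ * Us k')‖ ^ 4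


section Aux

variable {ι : Type} [Fintype ι] [DecidableEq ι]

instance : T2Space (UG ι) := inferInstance

lemma continuous_twirl_entry (ρ : Matrix (ι × ι) (ι × ι) ℂ) (i j : ι × ι) :
    Continuous fun u : UG ι =>
      ((((u : Matrix ι ι ℂ) ⊗ₖ (u : Matrix ι ι ℂ)) * ρ *
        ((u : Matrix ι ι ℂ) ⊗ₖ (u : Matrix ι ι ℂ))ᴴ) i j) := by
  have hent : ∀ a b : ι, Continuous fun u : UG ι => (u : Matrix ι ι ℂ) a b := by
    intro a b
    exact (continuous_apply b).comp ((continuous_apply a).comp continuous_subtype_val)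
  have hk : ∀ p q : ι × ι,
      Continuous fun u : UG ι => ((u : Matrix ι ι ℂ) ⊗ₖ (u : Matrix ι ι ℂ)) p q := by
    intro p q
    simp only [Matrix.kroneckerMap_apply]; exact (hent p.1 q.1).mul (hent p.2 q.2)
  simp only [Matrix.mul_apply, Matrix.conjTranspose_apply]
  refine continuous_finset_sum _ fun l _ => Continuous.mul ?_ ?_
  · exact continuous_finset_sum _ fun k _ => ((hk i k).mul continuous_const)
  · exact Complex.continuous_conj.comp (hk j l)

instance haarUG_prob : IsProbabilityMeasure (haarUG ι) := by
  constructor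
  have := MeasureTheory.Measure.haarMeasure_self
    (K₀ := (⟨⟨Set.univ, isCompact_univ⟩, by rw [interior_univ]; exact Set.univ_nonempty⟩ :
      TopologicalSpace.PositiveCompacts (UG ι)))
  simpa [haarUG] using this

instance haarUG_inv : (haarUG ι).IsMulLeftInvariant := by
  unfold haarUG
  infer_instance

lemma integrable_twirl_entry (ρ : Matrix (ι × ι) (ι × ι) ℂ) (i j : ι × ι) :
    MeasureTheory.Integrable (fun u : UG ι =>
      ((((u : Matrix ι ι ℂ) ⊗ₖ (u : Matrix ι ι ℂ)) * ρ *
        ((u : Matrix ι ι ℂ) ⊗ₖ (u : Matrix ι ι ℂ))ᴴ) i j)) (haarUG ι) :=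
  (continuous_twirl_entry ρ i j).integrable_of_hasCompactSupport
    (HasCompactSupport.of_compactSpace _)

end Aux
section Aux2

variable {ι : Type} [Fintype ι] [DecidableEq ι]

lemma haarTwirl_conj (ρ : Matrix (ι × ι) (ι × ι) ℂ) (v : UG ι) :
    ((v : Matrix ι ι ℂ) ⊗ₖ (v : Matrix ι ι ℂ)) * haarTwirl ι ρ *
      ((v : Matrix ι ι ℂ) ⊗ₖ (v : Matrix ι ι ℂ))ᴴ = haarTwirl ι ρ := by
  set A : Matrix (ι × ι) (ι × ι) ℂ := (v : Matrix ι ι ℂ) ⊗ₖ (v : Matrix ι ι ℂ) with hA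
  set F : UG ι → Matrix (ι × ι) (ι × ι) ℂ := fun u =>
    ((u : Matrix ι ι ℂ) ⊗ₖ (u : Matrix ι ι ℂ)) * ρ *
      ((u : Matrix ι ι ℂ) ⊗ₖ (u : Matrix ι ι ℂ))ᴴ with hF
  have hint : ∀ k l, MeasureTheory.Integrable (fun u : UG ι => F u k l) (haarUG ι) :=
    fun k l => integrable_twirl_entry ρ k l
  have hf : ∀ u : UG ι, A * F u * Aᴴ = F (v * u) := by
    intro u
    have hcoe : ((v * u : UG ι) : Matrix ι ι ℂ) = (v : Matrix ι ι ℂ) * (u : Matrix ι ι ℂ) := rfl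
    have h1 : ((v : Matrix ι ι ℂ) * (u : Matrix ι ι ℂ)) ⊗ₖ ((v : Matrix ι ι ℂ) * (u : Matrix ι ι ℂ))
        = A * ((u : Matrix ι ι ℂ) ⊗ₖ (u : Matrix ι ι ℂ)) :=
      Matrix.mul_kronecker_mul _ _ _ _
    simp only [hF, hcoe, h1, Matrix.conjTranspose_mul]
    noncomm_ring
  ext i j
  have step1 : (A * haarTwirl ι ρ * Aᴴ) i j
      = ∫ u : UG ι, (A * F u * Aᴴ) i j ∂(haarUG ι) := by
    simp only [Matrix.mul_apply, Matrix.conjTranspose_apply, haarTwirl, Matrix.of_apply]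
    rw [MeasureTheory.integral_finset_sum]
    swap
    · intro l _
      apply MeasureTheory.Integrable.mul_const
      apply MeasureTheory.integrable_finset_sum
      intro k _
      exact (hint k l).const_mul _
    refine Finset.sum_congr rfl fun l _ => ?_
    rw [MeasureTheory.integral_mul_const, MeasureTheory.integral_finset_sum]
    swap
    · intro k _
      exact (hint k l).const_mul _
    congr 1
    refine Finset.sum_congr rfl fun k _ => ?_
    rw [MeasureTheory.integral_const_mul]
    congr 1
  have step2 : (∫ u : UG ι, (A * F u * Aᴴ) i j ∂(haarUG ι))
      = ∫ u : UG ι, F u i j ∂(haarUG ι) := by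
    have : (fun u : UG ι => (A * F u * Aᴴ) i j) = fun u : UG ι => F (v * u) i j := by
      funext u; rw [hf u]
    rw [this]
    exact MeasureTheory.integral_mul_left_eq_self (fun u : UG ι => F u i j) v
  calc (A * haarTwirl ι ρ * Aᴴ) i j = ∫ u : UG ι, F u i j ∂(haarUG ι) := step1.trans step2
    _ = haarTwirl ι ρ i j := rfl

end Aux2
section Aux3

variable {ι : Type} [Fintype ι] [DecidableEq ι]

lemma vecMulVec_mulVec' (a b x : ι → ℂ) :
    (Matrix.vecMulVec a b).mulVec x = (b ⬝ᵥ x) • a := by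
  funext i
  simp only [Matrix.mulVec, Matrix.vecMulVec_apply, dotProduct, Pi.smul_apply, smul_eq_mul,
    Finset.sum_mul]
  exact Finset.sum_congr rfl fun j _ => by ring

lemma rotation_exists (e f : ι → ℂ) (he : star e ⬝ᵥ e = 1) (hf : star f ⬝ᵥ f = 1)
    (hef : star e ⬝ᵥ f = 0) :
    ∃ V ∈ Matrix.unitaryGroup ι ℂ, V.mulVec e =
      (((Real.sqrt 2)⁻¹ : ℝ) : ℂ) • e + (((Real.sqrt 2)⁻¹ : ℝ) : ℂ) • f := by
  set c : ℂ := (((Real.sqrt 2)⁻¹ : ℝ) : ℂ) with hcdef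
  have hc : star c = c := by simp [hcdef]
  have hc2 : c * c = 2⁻¹ := by
    rw [hcdef, ← Complex.ofReal_mul]
    norm_cast
    rw [← mul_inv]
    rw [Real.mul_self_sqrt (by norm_num : (2:ℝ) ≥ 0)]
    norm_num
  have hfe : star f ⬝ᵥ e = 0 := by
    have h := congrArg star hef
    rw [star_dotProduct] at h
    simpa using h
  set V : Matrix ι ι ℂ := 1 + (c - 1) • Matrix.vecMulVec e (star e)
      - c • Matrix.vecMulVec e (star f) + c • Matrix.vecMulVec f (star e)
      + (c - 1) • Matrix.vecMulVec f (star f) with hVdef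
  have hVx : ∀ x : ι → ℂ, V.mulVec x = x
      + ((c - 1) * (star e ⬝ᵥ x) - c * (star f ⬝ᵥ x)) • e
      + (c * (star e ⬝ᵥ x) + (c - 1) * (star f ⬝ᵥ x)) • f := by
    intro x
    rw [hVdef]
    simp only [Matrix.add_mulVec, Matrix.sub_mulVec, Matrix.smul_mulVec,
      Matrix.one_mulVec, vecMulVec_mulVec']
    funext i
    simp only [Pi.add_apply, Pi.sub_apply, Pi.smul_apply, smul_eq_mul]
    ring
  have hpair : ∀ x y : ι → ℂ, star (V.mulVec x) ⬝ᵥ V.mulVec y = star x ⬝ᵥ y := by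
    intro x y
    rw [hVx x, hVx y]
    set a := star e ⬝ᵥ x with ha
    set b := star f ⬝ᵥ x with hb
    set a' := star e ⬝ᵥ y with ha'
    set b' := star f ⬝ᵥ y with hb'
    have hxe : star x ⬝ᵥ e = star a := by
      rw [ha, star_dotProduct]
    have hxf : star x ⬝ᵥ f = star b := by
      rw [hb, star_dotProduct]
    simp only [star_add, star_smul, add_dotProduct, smul_dotProduct, dotProduct_add,
      dotProduct_smul, smul_eq_mul, star_sub, star_mul', star_one, hc,
      hxe, hxf, he, hf, hef, hfe, ← ha', ← hb']
    ring_nf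
    linear_combination (2 * (star a * a' + star b * b')) * hc2
  refine ⟨V, ?_, ?_⟩
  · rw [Matrix.mem_unitaryGroup_iff']
    ext i j
    have h := hpair (Pi.single i 1) (Pi.single j 1)
    have hl : star (V.mulVec (Pi.single i 1)) ⬝ᵥ V.mulVec (Pi.single j 1)
        = (star V * V) i j := by
      simp [Matrix.mul_apply, dotProduct, Matrix.mulVec_single, Matrix.star_apply, mul_comm]
    have hr : star (Pi.single i 1 : ι → ℂ) ⬝ᵥ (Pi.single j 1 : ι → ℂ)
        = (1 : Matrix ι ι ℂ) i j := by
      simp [dotProduct, Pi.single_apply, Matrix.one_apply, eq_comm]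
    rw [hl, hr] at h
    exact h
  · rw [hVx e, he, hfe]
    funext i
    simp only [Pi.add_apply, Pi.smul_apply, smul_eq_mul]
    ring

end Aux3
section Aux4

variable {ι : Type} [Fintype ι] [DecidableEq ι]

lemma kron_conjT (A B : Matrix ι ι ℂ) : (A ⊗ₖ B)ᴴ = Aᴴ ⊗ₖ Bᴴ := by
  ext i j
  simp [Matrix.conjTranspose_apply, Matrix.kroneckerMap_apply, star_mul', mul_comm]

lemma kron_mulVec (A B : Matrix ι ι ℂ) (x y : ι → ℂ) :
    (A ⊗ₖ B).mulVec (fun p : ι × ι => x p.1 * y p.2)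
      = fun p : ι × ι => (A.mulVec x) p.1 * (B.mulVec y) p.2 := by
  funext p
  simp only [Matrix.mulVec, dotProduct, Matrix.kroneckerMap_apply, Fintype.sum_prod_type]
  rw [Finset.sum_mul_sum]
  exact Finset.sum_congr rfl fun j1 _ => Finset.sum_congr rfl fun j2 _ => by ring

lemma dot_kron (w1 w2 u1 u2 : ι → ℂ) :
    star (fun p : ι × ι => w1 p.1 * w2 p.2) ⬝ᵥ (fun p : ι × ι => u1 p.1 * u2 p.2)
      = (star w1 ⬝ᵥ u1) * (star w2 ⬝ᵥ u2) := by
  simp only [dotProduct, Pi.star_apply, star_mul', Fintype.sum_prod_type]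
  rw [Finset.sum_mul_sum]
  exact Finset.sum_congr rfl fun j1 _ => Finset.sum_congr rfl fun j2 _ => by ring

end Aux4

/-- if a unitary representation of a finite group induces a
unitary 2-design, then the representation is irreducible. -/
theorem twoDesign_implies_irreducible (d : ℕ)
    (G : Type) [Group G] [Fintype G] (π : G →* Matrix.unitaryGroup (Fin d) ℂ)
    (hD : IsUnitaryTwoDesign (fun g : G => (π g : Matrix (Fin d) (Fin d) ℂ))) :
    ∀ W : Submodule ℂ (Fin d → ℂ),
      (∀ g : G, ∀ x ∈ W, Matrix.mulVec (π g : Matrix (Fin d) (Fin d) ℂ) x ∈ W) →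
      W = ⊥ ∨ W = ⊤ := by
  intro W hW
  by_contra hcon
  push_neg at hcon
  obtain ⟨hWbot, hWtop⟩ := hcon
  -- Euclidean space setup
  let L : (Fin d → ℂ) ≃ₗ[ℂ] EuclideanSpace ℂ (Fin d) :=
    (WithLp.linearEquiv 2 ℂ (Fin d → ℂ)).symm
  set W' : Submodule ℂ (EuclideanSpace ℂ (Fin d)) := W.map (L : (Fin d → ℂ) →ₗ[ℂ] EuclideanSpace ℂ (Fin d)) with hW'def
  have hmemW' : ∀ x : Fin d → ℂ, L x ∈ W' ↔ x ∈ W := by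
    intro x
    constructor
    · rintro ⟨w, hw, hwx⟩
      have : w = x := L.injective hwx
      rwa [← this]
    · intro hx; exact ⟨x, hx, rfl⟩
  have hinner : ∀ v w : Fin d → ℂ, (inner ℂ (L v) (L w) : ℂ) = star v ⬝ᵥ w := by
    intro v w
    simp [PiLp.inner_apply, RCLike.inner_apply, dotProduct, L, mul_comm]
  -- the orthogonal projection as a matrix
  let pl : (Fin d → ℂ) →ₗ[ℂ] (Fin d → ℂ) :=
    L.symm.toLinearMap ∘ₗ (W'.subtype ∘ₗ (W'.orthogonalProjectionOnto).toLinearMap) ∘ₗ L.toLinearMap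
  set P : Matrix (Fin d) (Fin d) ℂ := LinearMap.toMatrix' pl with hPdef
  have hPx : ∀ x : Fin d → ℂ,
      P.mulVec x = L.symm ((W'.orthogonalProjectionOnto (L x) : EuclideanSpace ℂ (Fin d))) := by
    intro x
    have : P.mulVec x = Matrix.toLin' P x := rfl
    rw [this, hPdef, Matrix.toLin'_toMatrix']
    rfl
  have hPmem : ∀ x : Fin d → ℂ, P.mulVec x ∈ W := by
    intro x
    rw [hPx]
    have h1 : ((W'.orthogonalProjectionOnto (L x) : EuclideanSpace ℂ (Fin d))) ∈ W' :=
      (W'.orthogonalProjectionOnto (L x)).2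
    rcases h1 with ⟨w, hw, hwx⟩
    rw [← hwx]
    simpa using hw
  have hPe : ∀ x ∈ W, P.mulVec x = x := by
    intro x hx
    rw [hPx]
    rw [show ((W'.orthogonalProjectionOnto (L x) : EuclideanSpace ℂ (Fin d))) = L x from Submodule.starProjection_eq_self_iff.2 ((hmemW' x).2 hx)]
    simp
  have hPf : ∀ x : Fin d → ℂ, L x ∈ W'ᗮ → P.mulVec x = 0 := by
    intro x hx
    rw [hPx, Submodule.orthogonalProjectionOnto_apply_of_mem_orthogonal hx]
    simp
  -- P commutes with the representation
  have hadj : ∀ (M : Matrix (Fin d) (Fin d) ℂ) (w x : Fin d → ℂ),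
      star w ⬝ᵥ M.mulVec x = star (Mᴴ.mulVec w) ⬝ᵥ x := by
    intro M w x
    rw [Matrix.star_mulVec, Matrix.conjTranspose_conjTranspose, Matrix.dotProduct_mulVec]
  have horth : ∀ (g : G) (x : Fin d → ℂ), L x ∈ W'ᗮ →
      L ((π g : Matrix (Fin d) (Fin d) ℂ).mulVec x) ∈ W'ᗮ := by
    intro g x hx
    rw [Submodule.mem_orthogonal]
    rintro u ⟨w, hw, hwu⟩
    rw [← hwu, LinearEquiv.coe_coe, hinner]
    rw [hadj]
    have hstar : ((π g : Matrix (Fin d) (Fin d) ℂ))ᴴ = ((π g⁻¹ : Matrix (Fin d) (Fin d) ℂ)) := by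
      rw [map_inv]
      rfl
    rw [hstar]
    have hmem : (π g⁻¹ : Matrix (Fin d) (Fin d) ℂ).mulVec w ∈ W := hW g⁻¹ w hw
    rw [← hinner]
    exact (Submodule.mem_orthogonal W' (L x)).1 hx _ ((hmemW' _).2 hmem)
  have hcomm : ∀ g : G, (π g : Matrix (Fin d) (Fin d) ℂ) * P = P * (π g : Matrix (Fin d) (Fin d) ℂ) := by
    intro g
    have hvec : ∀ x : Fin d → ℂ,
        (π g : Matrix (Fin d) (Fin d) ℂ).mulVec (P.mulVec x)
          = P.mulVec ((π g : Matrix (Fin d) (Fin d) ℂ).mulVec x) := by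
      intro x
      set U : Matrix (Fin d) (Fin d) ℂ := (π g : Matrix (Fin d) (Fin d) ℂ) with hU
      have hdecomp : U.mulVec x = U.mulVec (P.mulVec x) + U.mulVec (x - P.mulVec x) := by
        have h0 : P.mulVec x + (x - P.mulVec x) = x := by abel
        rw [← Matrix.mulVec_add, h0]
      have h1 : P.mulVec (U.mulVec (P.mulVec x)) = U.mulVec (P.mulVec x) :=
        hPe _ (hW g _ (hPmem x))
      have h2 : P.mulVec (U.mulVec (x - P.mulVec x)) = 0 := by
        apply hPf
        apply horth
        have : L (x - P.mulVec x) = L x - L (P.mulVec x) := by simp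
        rw [this, hPx]
        simpa using (Submodule.sub_starProjection_mem_orthogonal (K := W') (L x) : L x - ((W'.orthogonalProjectionOnto (L x) : EuclideanSpace ℂ (Fin d))) ∈ W'ᗮ)
      rw [hdecomp, Matrix.mulVec_add, h1, h2, add_zero]
    ext i j
    have := congrFun (hvec (Pi.single j 1)) i
    simp only [Matrix.mulVec_mulVec] at this
    simpa using this
  -- unit vectors in W and W'ᗮ
  have hexe : ∃ e : Fin d → ℂ, e ∈ W ∧ star e ⬝ᵥ e = 1 := by
    obtain ⟨e0, he0, hne⟩ := Submodule.exists_mem_ne_zero_of_ne_bot hWbot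
    have hnorm : ‖L e0‖ ≠ 0 := by
      simp only [norm_ne_zero_iff]
      intro h
      exact hne (by simpa using congrArg L.symm h)
    refine ⟨((‖L e0‖ : ℂ))⁻¹ • e0, W.smul_mem _ he0, ?_⟩
    rw [← hinner]
    have : L (((‖L e0‖ : ℂ))⁻¹ • e0) = ((‖L e0‖ : ℂ))⁻¹ • L e0 := by simp
    rw [this, inner_smul_left, inner_smul_right, inner_self_eq_norm_sq_to_K]
    field_simp
    norm_cast
    simp only [Complex.conj_ofReal]; push_cast; field_simp [Complex.ofReal_ne_zero.2 hnorm]; simp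
  have hexf : ∃ f : Fin d → ℂ, L f ∈ W'ᗮ ∧ star f ⬝ᵥ f = 1 := by
    have hW'top : W' ≠ ⊤ := by
      intro h
      apply hWtop
      rw [eq_top_iff]
      intro x _
      have : L x ∈ W' := by rw [h]; trivial
      exact (hmemW' x).1 this
    have hbot : W'ᗮ ≠ ⊥ := by
      intro h
      exact hW'top (Submodule.orthogonal_eq_bot_iff.1 h)
    obtain ⟨f0, hf0, hne⟩ := Submodule.exists_mem_ne_zero_of_ne_bot hbot
    have hnorm : ‖f0‖ ≠ 0 := norm_ne_zero_iff.2 hne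
    refine ⟨L.symm (((‖f0‖ : ℂ))⁻¹ • f0), ?_, ?_⟩
    · have : L (L.symm (((‖f0‖ : ℂ))⁻¹ • f0)) = ((‖f0‖ : ℂ))⁻¹ • f0 := by simp
      rw [this]
      exact W'ᗮ.smul_mem _ hf0
    · rw [← hinner]
      have : L (L.symm (((‖f0‖ : ℂ))⁻¹ • f0)) = ((‖f0‖ : ℂ))⁻¹ • f0 := by simp
      rw [this, inner_smul_left, inner_smul_right, inner_self_eq_norm_sq_to_K]
      field_simp
      norm_cast
      simp only [Complex.conj_ofReal]; push_cast; field_simp [Complex.ofReal_ne_zero.2 hnorm]; simp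
  obtain ⟨e, heW, he⟩ := hexe
  obtain ⟨f, hfW, hf⟩ := hexf
  have hef : star e ⬝ᵥ f = 0 := by
    rw [← hinner]
    exact (Submodule.mem_orthogonal W' (L f)).1 hfW _ ((hmemW' e).2 heW)
  have hfe : star f ⬝ᵥ e = 0 := by
    have h := congrArg star hef
    rw [star_dotProduct] at h
    simpa using h
  -- Pe = e, Pf = 0
  have hPee : P.mulVec e = e := hPe e heW
  have hPff : P.mulVec f = 0 := hPf f hfW
  -- the design gives haarTwirl (P ⊗ P) = P ⊗ P
  have hUU : ∀ g : G, ((π g : Matrix (Fin d) (Fin d) ℂ) ⊗ₖ (π g : Matrix (Fin d) (Fin d) ℂ))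
      * (P ⊗ₖ P) * ((π g : Matrix (Fin d) (Fin d) ℂ) ⊗ₖ (π g : Matrix (Fin d) (Fin d) ℂ))ᴴ
      = P ⊗ₖ P := by
    intro g
    set U : Matrix (Fin d) (Fin d) ℂ := (π g : Matrix (Fin d) (Fin d) ℂ) with hU
    have h1 : (U ⊗ₖ U) * (P ⊗ₖ P) = (P ⊗ₖ P) * (U ⊗ₖ U) := by
      rw [← Matrix.mul_kronecker_mul, ← Matrix.mul_kronecker_mul, hcomm g]
    have h2 : (U ⊗ₖ U) * (U ⊗ₖ U)ᴴ = 1 := by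
      rw [kron_conjT, ← Matrix.mul_kronecker_mul]
      have : U * Uᴴ = 1 := (Matrix.mem_unitaryGroup_iff).1 (π g).2
      rw [this, Matrix.one_kronecker_one]
    rw [h1, Matrix.mul_assoc, h2, Matrix.mul_one]
  have hTwirl : haarTwirl (Fin d) (P ⊗ₖ P) = P ⊗ₖ P := by
    have h := hD.2 (P ⊗ₖ P)
    rw [← h]
    have hsum : (∑ g : G, ((π g : Matrix (Fin d) (Fin d) ℂ) ⊗ₖ (π g : Matrix (Fin d) (Fin d) ℂ))
        * (P ⊗ₖ P) * ((π g : Matrix (Fin d) (Fin d) ℂ) ⊗ₖ (π g : Matrix (Fin d) (Fin d) ℂ))ᴴ)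
        = (Fintype.card G : ℂ) • (P ⊗ₖ P) := by
      rw [Finset.sum_congr rfl fun g _ => hUU g]
      rw [Finset.sum_const, Finset.card_univ, ← Nat.cast_smul_eq_nsmul ℂ]
    rw [hsum, smul_smul, inv_mul_cancel₀, one_smul]
    exact_mod_cast Fintype.card_ne_zero
  -- the rotation unitary
  obtain ⟨V, hVmem, hVe⟩ := rotation_exists e f he hf hef
  set c : ℂ := (((Real.sqrt 2)⁻¹ : ℝ) : ℂ) with hcdef
  have hc2 : c * c = 2⁻¹ := by
    rw [hcdef, ← Complex.ofReal_mul]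
    norm_cast
    rw [← mul_inv, Real.mul_self_sqrt (by norm_num : (2:ℝ) ≥ 0)]
    norm_num
  -- commutation of V ⊗ V with P ⊗ P
  have hVP : (V ⊗ₖ V) * (P ⊗ₖ P) = (P ⊗ₖ P) * (V ⊗ₖ V) := by
    have h := haarTwirl_conj (P ⊗ₖ P) (⟨V, hVmem⟩ : UG (Fin d))
    rw [hTwirl] at h
    have h2 : (V ⊗ₖ V)ᴴ * (V ⊗ₖ V) = 1 := by
      rw [kron_conjT, ← Matrix.mul_kronecker_mul]
      have : Vᴴ * V = 1 := (Matrix.mem_unitaryGroup_iff').1 hVmem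
      rw [this, Matrix.one_kronecker_one]
    calc (V ⊗ₖ V) * (P ⊗ₖ P)
        = (V ⊗ₖ V) * (P ⊗ₖ P) * ((V ⊗ₖ V)ᴴ * (V ⊗ₖ V)) := by rw [h2, Matrix.mul_one]
      _ = ((V ⊗ₖ V) * (P ⊗ₖ P) * (V ⊗ₖ V)ᴴ) * (V ⊗ₖ V) := by
          rw [Matrix.mul_assoc ((V ⊗ₖ V) * (P ⊗ₖ P))]
      _ = (P ⊗ₖ P) * (V ⊗ₖ V) := by rw [h]
  -- final contradiction
  have hVPe : (V * P).mulVec e = c • e + c • f := by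
    rw [← Matrix.mulVec_mulVec, hPee, hVe]
  have hPVe : (P * V).mulVec e = c • e := by
    rw [← Matrix.mulVec_mulVec, hVe, Matrix.mulVec_add, Matrix.mulVec_smul, Matrix.mulVec_smul,
      hPee, hPff, smul_zero, add_zero]
  have hdote : star e ⬝ᵥ (c • e + c • f) = c := by
    rw [dotProduct_add, dotProduct_smul, dotProduct_smul, he, hef]
    simp
  have hdotf : star f ⬝ᵥ (c • e + c • f) = c := by
    rw [dotProduct_add, dotProduct_smul, dotProduct_smul, hf, hfe]
    simp
  have hc0 : c * c = 0 := by
    have hcontr := congrArg (fun M : Matrix ((Fin d) × (Fin d)) ((Fin d) × (Fin d)) ℂ =>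
      star (fun p : (Fin d) × (Fin d) => f p.1 * e p.2) ⬝ᵥ
        M.mulVec (fun p : (Fin d) × (Fin d) => e p.1 * e p.2)) hVP
    simp only at hcontr
    rw [← Matrix.mul_kronecker_mul, ← Matrix.mul_kronecker_mul, kron_mulVec, kron_mulVec,
      dot_kron, dot_kron, hVPe, hPVe, hdote, hdotf] at hcontr
    rw [dotProduct_smul, dotProduct_smul, hfe, he] at hcontr
    simpa using hcontr
  rw [hc2] at hc0
  norm_num at hc0
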